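/- The row-insertion action factors through the Knuth relations: for any row r and letters a < b ≤ c, one has r · (bac) = r · (bca), and for letters a ≤ b < c, one has r · (acb) = r · (cab), where the action of a word is the composition of the actions of its letters. -/

import Mathlib

/-- Schensted row insertion of a letter into a row, with the bumped letter
discarded: append `b` if every letter is `≤ b`, otherwise replace the
leftmost letter strictly greater than `b` by `b`. -/
def rowIns {A : Type*} [LinearOrder A] : List A → A → List A
  | [], b => [b]
  | a :: r, b => if a ≤ b then a :: rowIns r b else b :: r

/-- Action of a word on a row, composing letter actions left to right. -/
def rowActW {A : Type*} [LinearOrder A] (r : List A) (w : List A) : List A :=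
  w.foldl rowIns r

theorem rowIns_aux1 {A : Type*} [LinearOrder A] (a b c : A) (hab : a < b) (hbc : b ≤ c) :
    ∀ r : List A, List.Pairwise (· ≤ ·) r →
      rowIns (rowIns (rowIns r b) a) c = rowIns (rowIns (rowIns r b) c) a
  | [], _ => by
    simp [rowIns, hab.not_ge, le_trans hab.le hbc, hbc]
  | h :: t, hs => by
    rw [List.pairwise_cons] at hs
    obtain ⟨hht, hts⟩ := hs
    by_cases h1 : h ≤ b
    · by_cases h2 : h ≤ a
      · simp [rowIns, h1, h2, le_trans h1 hbc, rowIns_aux1 a b c hab hbc t hts]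
      · simp [rowIns, h1, h2, le_trans h1 hbc, le_trans hab.le hbc]
    · simp [rowIns, h1, hab.not_ge, le_trans hab.le hbc, hbc]

theorem rowIns_aux0 {A : Type*} [LinearOrder A] (b c : A) (hbc : b < c) :
    ∀ t : List A, (∀ x ∈ t, c < x) → rowIns (rowIns t c) b = rowIns t b
  | [], _ => by simp [rowIns, hbc.not_ge]
  | u :: s, hlt => by
    have huc : ¬ u ≤ c := not_le.2 (hlt u (.head _))
    have hub : ¬ u ≤ b := not_le.2 (lt_trans hbc (hlt u (.head _)))
    simp [rowIns, huc, hub, hbc.not_ge]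

theorem rowIns_aux2 {A : Type*} [LinearOrder A] (a b c : A) (hab : a ≤ b) (hbc : b < c) :
    ∀ r : List A, List.Pairwise (· ≤ ·) r →
      rowIns (rowIns (rowIns r a) c) b = rowIns (rowIns (rowIns r c) a) b
  | [], _ => by
    simp [rowIns, le_trans hab hbc.le, hab, hbc.not_ge,
      (lt_of_le_of_lt hab hbc).not_ge]
  | h :: t, hs => by
    rw [List.pairwise_cons] at hs
    obtain ⟨hht, hts⟩ := hs
    by_cases h1 : h ≤ a
    · simp [rowIns, h1, le_trans h1 hab, le_trans h1 (le_trans hab hbc.le),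
        rowIns_aux2 a b c hab hbc t hts]
    · by_cases h2 : h ≤ c
      · simp [rowIns, h1, h2, hab, le_trans hab hbc.le]
      · have hlem := rowIns_aux0 b c hbc t
          (fun x hx => lt_of_lt_of_le (not_le.1 h2) (hht x hx))
        simp [rowIns, h1, h2, hab, le_trans hab hbc.le,
          (lt_of_le_of_lt hab hbc).not_ge, hlem]

/-- the row-insertion action factors through the Knuth
relations. -/
theorem rowAct_knuth {A : Type*} [LinearOrder A] (r : List A)
    (hr : List.Pairwise (· ≤ ·) r) :
    (∀ a b c : A, a < b → b ≤ c → rowActW r [b, a, c] = rowActW r [b, c, a]) ∧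
    (∀ a b c : A, a ≤ b → b < c → rowActW r [a, c, b] = rowActW r [c, a, b]) := by
  constructor
  · intro a b c hab hbc
    simpa [rowActW] using rowIns_aux1 a b c hab hbc r hr
  · intro a b c hab hbc
    simpa [rowActW] using rowIns_aux2 a b c hab hbc r hr
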